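/- Let F be an algebraically closed field and let γ ∈ GL(n, F). If some elements γ₁, ..., γ_g, δ₁, ..., δ_g ∈ GL(n, F) all commute with γ and γ = [γ₁,δ₁]···[γ_g,δ_g] is a product of their commutators, then every eigenvalue of γ is a root of unity. -/

import Mathlib

set_option maxHeartbeats 1000000
set_option synthInstance.maxHeartbeats 400000

open Polynomial Module Set

lemma eval_charpoly_aux {k : ℕ} {R : Type} [CommRing R] (A : Matrix (Fin k) (Fin k) R) (μ : R) :
    A.charpoly.eval μ = (μ • (1 : Matrix (Fin k) (Fin k) R) - A).det := by
  rw [Matrix.charpoly, ← coe_evalRingHom, RingHom.map_det]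
  congr 1
  ext i j
  by_cases h : i = j <;>
    simp [Matrix.charmatrix_apply, Matrix.sub_apply, Matrix.smul_apply, Matrix.one_apply, h,
      Matrix.diagonal_apply]

lemma det_smul_one_add_nilpotent {k : ℕ} {F : Type} [Field F] (B : Matrix (Fin k) (Fin k) F)
    (hB : IsNilpotent B) (μ : F) : (μ • (1 : Matrix (Fin k) (Fin k) F) + B).det = μ ^ k := by
  have h1 : (-B).charpoly = X ^ k := by
    have h := (Matrix.isNilpotent_charpoly_sub_pow_of_isNilpotent hB.neg).eq_zero
    rw [sub_eq_zero] at h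
    simpa using h
  have h2 := eval_charpoly_aux (-B) μ
  rw [h1] at h2
  simpa using h2.symm

/-- If `γ ∈ GL(n, F)` (F algebraically closed) commutes with `γ₁, ..., γ_g, δ₁, ..., δ_g`
and equals the product of their commutators, then every eigenvalue of `γ` is a root of unity. -/
theorem eigenvalues_rootsOfUnity_of_product_of_commutators
    (F : Type) [Field F] [IsAlgClosed F] (n g : ℕ)
    (γ : GL (Fin n) F) (γs δs : Fin g → GL (Fin n) F)
    (hcommγ : ∀ i, Commute γ (γs i)) (hcommδ : ∀ i, Commute γ (δs i))
    (hγ : γ = (List.ofFn fun i : Fin g => γs i * δs i * (γs i)⁻¹ * (δs i)⁻¹).prod)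
    (μ : F) (hμ : (γ : Matrix (Fin n) (Fin n) F).charpoly.IsRoot μ) :
    ∃ m : ℕ, 0 < m ∧ μ ^ m = 1 := by
  classical
  set M : Matrix (Fin n) (Fin n) F := (γ : Matrix (Fin n) (Fin n) F) with hMdef
  set f : Module.End F (Fin n → F) := M.mulVecLin with hfdef
  -- μ is an eigenvalue: find a nonzero vector in the generalized eigenspace
  have hdet : (μ • (1 : Matrix (Fin n) (Fin n) F) - M).det = 0 := by
    have h := eval_charpoly_aux M μ
    rw [Polynomial.IsRoot] at hμ
    rw [← h]; exact hμ
  obtain ⟨v, hv0, hv⟩ := (Matrix.exists_mulVec_eq_zero_iff).mpr hdet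
  set V : Submodule F (Fin n → F) := f.maxGenEigenspace μ with hVdef
  have hvV : v ∈ V := by
    rw [Module.End.mem_maxGenEigenspace]
    refine ⟨1, ?_⟩
    have : (μ • (1 : Matrix (Fin n) (Fin n) F) - M).mulVec v
        = μ • v - M.mulVec v := by
      rw [Matrix.sub_mulVec, Matrix.smul_mulVec, Matrix.one_mulVec]
    rw [this] at hv
    have h2 : M.mulVec v - μ • v = 0 := by
      rw [← neg_sub]; rw [hv]; simp
    simpa [pow_one, f, Matrix.mulVecLin] using h2
  haveI : Nontrivial V := nontrivial_of_ne ⟨v, hvV⟩ 0 (by simpa [Subtype.ext_iff] using hv0)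
  set d := finrank F V with hd
  have hdpos : 0 < d := finrank_pos
  -- centralizer setup
  set Z := Subgroup.centralizer ({γ} : Set (GL (Fin n) F)) with hZdef
  have memZ : ∀ a : GL (Fin n) F, Commute γ a → a ∈ Z := fun a ha =>
    Subgroup.mem_centralizer_iff.mpr (by rintro h rfl; exact ha.eq)
  have hγZ : γ ∈ Z := memZ γ (Commute.refl γ)
  -- each element of Z restricts to V
  have hcomm : ∀ z : Z, Commute f (Matrix.mulVecLin ((z : GL (Fin n) F) : Matrix (Fin n) (Fin n) F)) := by
    intro z
    have hz : γ * (z : GL (Fin n) F) = (z : GL (Fin n) F) * γ :=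
      Subgroup.mem_centralizer_iff.mp z.2 γ (Set.mem_singleton _)
    have hmz : M * ((z : GL (Fin n) F) : Matrix (Fin n) (Fin n) F)
        = ((z : GL (Fin n) F) : Matrix (Fin n) (Fin n) F) * M := by
      have := congrArg Units.val hz
      simpa [Units.val_mul] using this
    show _ * _ = _ * _
    rw [Module.End.mul_eq_comp, Module.End.mul_eq_comp, ← Matrix.mulVecLin_mul, ← Matrix.mulVecLin_mul,
      hmz]
  have hmaps : ∀ z : Z, MapsTo (Matrix.mulVecLin ((z : GL (Fin n) F) : Matrix (Fin n) (Fin n) F)) V V :=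
    fun z => Module.End.mapsTo_maxGenEigenspace_of_comm (hcomm z) μ
  let r : Z → Module.End F V := fun z => LinearMap.restrict _ (hmaps z)
  have rmul : ∀ z w : Z, r (z * w) = r z * r w := by
    intro z w
    ext x
    simp [r, LinearMap.restrict_apply, Module.End.mul_apply, Units.val_mul,
      Matrix.mulVecLin_mul]
    exact (congrFun (Matrix.mulVec_mulVec (M := ((z : GL (Fin n) F) : Matrix (Fin n) (Fin n) F))
      (N := ((w : GL (Fin n) F) : Matrix (Fin n) (Fin n) F)) (v := (x : Fin n → F))) _).symm
  have rone : r 1 = 1 := by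
    ext x
    simp [r, LinearMap.restrict_apply]
  let Φ : Z →* F :=
    { toFun := fun z => LinearMap.det (r z)
      map_one' := by
        show LinearMap.det (r 1) = 1
        rw [rone]; exact map_one LinearMap.det
      map_mul' := fun z w => by
        show LinearMap.det (r (z * w)) = LinearMap.det (r z) * LinearMap.det (r w)
        rw [rmul]; exact map_mul LinearMap.det _ _ }
  have hΦinv : ∀ z : Z, Φ z * Φ z⁻¹ = 1 := by
    intro z; rw [← map_mul, mul_inv_cancel, map_one]
  have hΦcomm : ∀ a b : Z, Φ (a * b * a⁻¹ * b⁻¹) = 1 := by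
    intro a b
    rw [map_mul, map_mul, map_mul]
    calc Φ a * Φ b * Φ a⁻¹ * Φ b⁻¹ = (Φ a * Φ a⁻¹) * (Φ b * Φ b⁻¹) := by ring
    _ = 1 := by rw [hΦinv, hΦinv, one_mul]
  -- Φ γ = 1
  have hmemγs : ∀ i, γs i ∈ Z := fun i => memZ _ (hcommγ i)
  have hmemδs : ∀ i, δs i ∈ Z := fun i => memZ _ (hcommδ i)
  set L : List Z := List.ofFn (fun i : Fin g =>
    (⟨γs i, hmemγs i⟩ : Z) * ⟨δs i, hmemδs i⟩ * (⟨γs i, hmemγs i⟩ : Z)⁻¹ * (⟨δs i, hmemδs i⟩ : Z)⁻¹)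
    with hLdef
  have hLcoe : ((L.prod : Z) : GL (Fin n) F)
      = (List.ofFn fun i : Fin g => γs i * δs i * (γs i)⁻¹ * (δs i)⁻¹).prod := by
    have h1 : ((L.prod : Z) : GL (Fin n) F) = (L.map Z.subtype).prod := map_list_prod Z.subtype L
    rw [h1, hLdef, List.map_ofFn]
    rfl
  have hLprod : (⟨γ, hγZ⟩ : Z) = L.prod := Subtype.ext (hγ.trans hLcoe.symm)
  have hΦγ : Φ ⟨γ, hγZ⟩ = 1 := by
    rw [hLprod, map_list_prod]
    apply List.prod_eq_one
    intro x hx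
    rw [List.map_ofFn] at hx
    obtain ⟨i, hi⟩ := List.mem_ofFn.mp hx
    rw [← hi]
    exact hΦcomm _ _
  -- Φ γ = μ ^ d
  have hnil : IsNilpotent (r ⟨γ, hγZ⟩ - μ • (1 : Module.End F V)) := by
    have h := Module.End.isNilpotent_restrict_maxGenEigenspace_sub_algebraMap f μ
    have heq : r ⟨γ, hγZ⟩ - μ • (1 : Module.End F V)
        = (f - algebraMap F (Module.End F (Fin n → F)) μ).restrict
          (Module.End.mapsTo_maxGenEigenspace_of_comm
            (Algebra.mul_sub_algebraMap_commutes f μ) μ) := by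
      ext x
      simp [r, LinearMap.restrict_apply, LinearMap.sub_apply, Module.algebraMap_end_apply,
        hfdef, hMdef, Matrix.mulVecLin_apply]
      rfl
    rw [heq]
    exact h
  have hΦγ2 : Φ ⟨γ, hγZ⟩ = μ ^ d := by
    show LinearMap.det (r ⟨γ, hγZ⟩) = μ ^ d
    let b : Basis (Fin d) F V := Module.finBasis F V
    rw [← LinearMap.det_toMatrix b]
    have hsplit : r ⟨γ, hγZ⟩ = μ • (1 : Module.End F V) + (r ⟨γ, hγZ⟩ - μ • 1) := by abel
    rw [hsplit, map_add]
    have h1 : LinearMap.toMatrix b b (μ • (1 : Module.End F V)) = μ • 1 := by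
      rw [map_smul]
      congr 1
      exact LinearMap.toMatrix_id b
    rw [h1]
    apply det_smul_one_add_nilpotent
    obtain ⟨k, hk⟩ := hnil
    exact ⟨k, by rw [LinearMap.toMatrix_pow, hk, map_zero]⟩
  exact ⟨d, hdpos, by rw [← hΦγ2, hΦγ]⟩
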